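/- A one-hidden-layer P-ReLU network with N hidden neurons and K = 2 outputs can be represented by an oblique decision tree of depth N + 1: there exist affine decision functions, one per hidden neuron plus one for the output difference, such that the tree's leaf assignment equals the network's argmin-treatment map on all of ℝ^d. -/
import Mathlib

private lemma prelu_key (d N : ℕ) (W₁ : Fin N → Fin d → ℝ) (b₁ : Fin N → ℝ)
    (W₂ : Fin 2 → Fin N → ℝ) (b₂ : Fin 2 → ℝ) (x : Fin d → ℝ) (q : Fin N → Bool)
    (hq : ∀ j, q j = true ↔ 0 ≤ (∑ i, W₁ j i * x i) + b₁ j) :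
    (∑ k, (∑ j, if q j then (W₂ 1 j - W₂ 0 j) * W₁ j k else 0) * x k)
      + ((∑ j, if q j then (W₂ 1 j - W₂ 0 j) * b₁ j else 0) + (b₂ 1 - b₂ 0))
    = ((∑ j, W₂ 1 j * max (∑ i, W₁ j i * x i + b₁ j) 0) + b₂ 1)
      - ((∑ j, W₂ 0 j * max (∑ i, W₁ j i * x i + b₁ j) 0) + b₂ 0) := by
  have h1 : (∑ k, (∑ j, if q j then (W₂ 1 j - W₂ 0 j) * W₁ j k else 0) * x k)
      = ∑ j, (if q j then (W₂ 1 j - W₂ 0 j) * (∑ i, W₁ j i * x i) else 0) := by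
    simp only [Finset.sum_mul, ite_mul, zero_mul]
    rw [Finset.sum_comm]
    congr 1; ext j
    split <;> simp [Finset.mul_sum, mul_assoc]
  have h2 : ∑ j, ((if q j then (W₂ 1 j - W₂ 0 j) * (∑ i, W₁ j i * x i) else 0)
        + (if q j then (W₂ 1 j - W₂ 0 j) * b₁ j else 0))
      = ∑ j, (W₂ 1 j * max (∑ i, W₁ j i * x i + b₁ j) 0
        - W₂ 0 j * max (∑ i, W₁ j i * x i + b₁ j) 0) := by
    refine Finset.sum_congr rfl fun j _ => ?_
    by_cases h : q j = true
    · have hs := (hq j).mp h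
      rw [if_pos h, if_pos h, max_eq_left hs]; ring
    · have hs : ¬ (0 ≤ (∑ i, W₁ j i * x i) + b₁ j) := fun c => h ((hq j).mpr c)
      rw [if_neg h, if_neg h, max_eq_right (le_of_not_ge hs)]; ring
  rw [Finset.sum_add_distrib, Finset.sum_sub_distrib] at h2
  rw [h1]
  linarith

theorem prelu_to_oblique_tree_two_treatments (d N : ℕ)
    (W₁ : Fin N → Fin d → ℝ) (b₁ : Fin N → ℝ)
    (W₂ : Fin 2 → Fin N → ℝ) (b₂ : Fin 2 → ℝ)
    (f : (Fin d → ℝ) → Fin 2 → ℝ)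
    (hf : ∀ x k, f x k = ∑ j, W₂ k j * max (∑ i, W₁ j i * x i + b₁ j) 0 + b₂ k)
    (π : (Fin d → ℝ) → Fin 2)
    (hπ : ∀ x, π x = if f x 0 ≤ f x 1 then 0 else 1) :
    -- there is an oblique decision tree of depth N + 1 computing π
    ∃ (ω : (i : Fin (N + 1)) → (Fin i → Bool) → (Fin d → ℝ))
      (β : (i : Fin (N + 1)) → (Fin i → Bool) → ℝ)
      (v : (Fin (N + 1) → Bool) → Fin 2),
      (∀ x : Fin d → ℝ, ∃ p : Fin (N + 1) → Bool, ∀ i : Fin (N + 1),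
        (0 ≤ (∑ k, ω i (fun j : Fin i => p (Fin.castLE i.isLt.le j)) k * x k)
              + β i (fun j : Fin i => p (Fin.castLE i.isLt.le j)) ↔ p i = true)) ∧
      (∀ (x : Fin d → ℝ) (p : Fin (N + 1) → Bool),
        (∀ i : Fin (N + 1),
          (0 ≤ (∑ k, ω i (fun j : Fin i => p (Fin.castLE i.isLt.le j)) k * x k)
                + β i (fun j : Fin i => p (Fin.castLE i.isLt.le j)) ↔ p i = true)) →
        π x = v p) := by
  classical
  refine ⟨fun i q => if h : (i : ℕ) < N then W₁ ⟨i, h⟩ else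
      (fun k => ∑ j : Fin N, if q ⟨j, by have := i.isLt; have := j.isLt; omega⟩
        then (W₂ 1 j - W₂ 0 j) * W₁ j k else 0),
    fun i q => if h : (i : ℕ) < N then b₁ ⟨i, h⟩ else
      ((∑ j : Fin N, if q ⟨j, by have := i.isLt; have := j.isLt; omega⟩
        then (W₂ 1 j - W₂ 0 j) * b₁ j else 0) + (b₂ 1 - b₂ 0)),
    fun p => if p (Fin.last N) then 0 else 1, ?_, ?_⟩
  · -- existence of a path
    intro x
    refine ⟨fun i => if h : (i : ℕ) < N
        then decide (0 ≤ (∑ k, W₁ ⟨i, h⟩ k * x k) + b₁ ⟨i, h⟩)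
        else decide (0 ≤ f x 1 - f x 0), ?_⟩
    intro i
    by_cases h : (i : ℕ) < N
    · simp only [dif_pos h, decide_eq_true_iff]
    · simp only [dif_neg h]
      have hq : ∀ j : Fin N,
          (if h' : ((Fin.castLE i.isLt.le
              ⟨(j : ℕ), by have := i.isLt; have := j.isLt; omega⟩ : Fin (N+1)) : ℕ) < N
            then decide (0 ≤ (∑ k, W₁ ⟨_, h'⟩ k * x k) + b₁ ⟨_, h'⟩)
            else decide (0 ≤ f x 1 - f x 0)) = true
          ↔ 0 ≤ (∑ k, W₁ j k * x k) + b₁ j := by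
        intro j
        rw [dif_pos (show ((Fin.castLE i.isLt.le ⟨(j : ℕ), _⟩ : Fin (N+1)) : ℕ) < N from j.isLt)]
        simp [decide_eq_true_iff]
      rw [prelu_key d N W₁ b₁ W₂ b₂ x _ hq, ← hf x 1, ← hf x 0, decide_eq_true_iff,
        sub_nonneg, ← sub_nonneg (b := f x 0)]
  · -- the leaf value computes π
    intro x p H
    rw [hπ]
    have hlast := H (Fin.last N)
    simp only [dif_neg (show ¬ ((Fin.last N : Fin (N+1)) : ℕ) < N by simp)] at hlast
    have hq : ∀ j : Fin N,
        p (Fin.castLE (Fin.last N).isLt.le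
          ⟨(j : ℕ), by have := j.isLt; simp [Fin.last]⟩) = true
        ↔ 0 ≤ (∑ k, W₁ j k * x k) + b₁ j := by
      intro j
      have hj := H ⟨(j : ℕ), Nat.lt_succ_of_lt j.isLt⟩
      simp only [dif_pos (show ((⟨(j : ℕ), Nat.lt_succ_of_lt j.isLt⟩ : Fin (N+1)) : ℕ) < N from j.isLt)] at hj
      simp only [Fin.eta] at hj
      exact hj.symm
    rw [prelu_key d N W₁ b₁ W₂ b₂ x _ hq, ← hf x 1, ← hf x 0, sub_nonneg] at hlast
    by_cases hle : f x 0 ≤ f x 1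
    · simp [hle, hlast.mp hle]
    · have hpl : ¬ p (Fin.last N) = true := fun c => hle (hlast.mpr c)
      simp [hle, hpl]
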